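/- Let β be a Boolean combination of atomic propositions over trace variables π₁,…,π_k. For any traces t₁,…,t_k, the assignment [πᵢ ↦ tᵢ] satisfies Fβ if and only if there exists a tuple (v₁,…,v_k) in the finite set V(t₁,…,t_k) = {(t₁(j),…,t_k(j)) | j ∈ ℕ} such that β is satisfied when each aᵢ_{πᵢ} is evaluated as a ∈ vᵢ. Consequently, satisfaction of any Boolean combination of formulas Fβ by [πᵢ ↦ tᵢ] depends only on V(t₁,…,t_k). -/
import Mathlib

/-- Boolean combinations of atomic propositions `a_π`. -/
inductive BC (α V : Type*)
  | atom : α → V → BC α V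
  | neg : BC α V → BC α V
  | or : BC α V → BC α V → BC α V

/-- Evaluation of a Boolean combination at a tuple of valuations. -/
def BC.eval {α V : Type*} (v : V → Set α) : BC α V → Prop
  | atom a π => a ∈ v π
  | neg β => ¬ β.eval v
  | or β γ => β.eval v ∨ γ.eval v

/-- Boolean combinations of formulas `F β`. -/
inductive FBC (α V : Type*)
  | f : BC α V → FBC α V
  | neg : FBC α V → FBC α V
  | or : FBC α V → FBC α V → FBC α V

/-- Satisfaction of a Boolean combination of `F β` formulas by a trace
assignment. -/
def FBC.sat {α V : Type*} (t : V → ℕ → Set α) : FBC α V → Prop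
  | f β => ∃ j : ℕ, β.eval (fun π => t π j)
  | neg φ => ¬ φ.sat t
  | or φ ψ => φ.sat t ∨ ψ.sat t

/-- The set `V(t₁,…,t_k)` of tuples of valuations occurring along the traces. -/
def valSet {α V : Type*} (t : V → ℕ → Set α) : Set (V → Set α) :=
  Set.range fun j => fun π => t π j

/-- `F β` is satisfied by `[πᵢ ↦ tᵢ]` iff some tuple of valuations in
`V(t₁,…,t_k)` satisfies `β`; consequently satisfaction of any Boolean combination
of `F β` formulas depends only on `V(t₁,…,t_k)`. -/
theorem f_sat_iff_valSet {α V : Type*} :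
    (∀ (β : BC α V) (t : V → ℕ → Set α),
      (FBC.f β).sat t ↔ ∃ v ∈ valSet t, β.eval v) ∧
    (∀ (φ : FBC α V) (t t' : V → ℕ → Set α),
      valSet t = valSet t' → (φ.sat t ↔ φ.sat t')) := by
  have h1 : ∀ (β : BC α V) (t : V → ℕ → Set α),
      (FBC.f β).sat t ↔ ∃ v ∈ valSet t, β.eval v := by
    intro β t
    constructor
    · rintro ⟨j, hj⟩; exact ⟨_, ⟨j, rfl⟩, hj⟩
    · rintro ⟨v, ⟨j, rfl⟩, hv⟩; exact ⟨j, hv⟩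
  refine ⟨h1, ?_⟩
  intro φ t t' h
  induction φ with
  | f β => rw [h1, h1, h]
  | neg φ ih => exact not_congr ih
  | or φ ψ ih1 ih2 => exact or_congr ih1 ih2
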